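/- Let ψ ∈ ℂ^D be a unit vector, ρ := |ψ⟩⟨ψ| the associated rank-one projection, and H ∈ M_D(ℂ) Hermitian. Then ‖[H,ρ]‖₁² = 4·(⟨ψ, H²ψ⟩ − ⟨ψ, Hψ⟩²), where [H,ρ] := Hρ − ρH and ‖A‖₁ := tr√(A†A) is the trace norm (note ⟨ψ, Hψ⟩ and ⟨ψ, H²ψ⟩ are real). -/

import Mathlib

open Matrix
open scoped ComplexOrder

noncomputable section

namespace Paper

open Classical in
/-- The square root of a positive semidefinite matrix (junk value `0` otherwise). -/
def msqrt {n : Type*} [Fintype n] [DecidableEq n] (A : Matrix n n ℂ) : Matrix n n ℂ :=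
  if hA : A.PosSemidef then
    (hA.1.eigenvectorUnitary : Matrix n n ℂ) * diagonal ((↑) ∘ (√·) ∘ hA.1.eigenvalues) *
      (star hA.1.eigenvectorUnitary : Matrix n n ℂ)
  else 0

/-- The trace norm `‖A‖₁ = tr √(A†A)` of a matrix. -/
def traceNorm {n : Type*} [Fintype n] [DecidableEq n] (A : Matrix n n ℂ) : ℝ :=
  (Matrix.trace (msqrt (Aᴴ * A))).re

section aux

variable {n : Type*} [Fintype n] [DecidableEq n]

lemma vmv_conjT (u v : n → ℂ) :
    (vecMulVec u v)ᴴ = vecMulVec (star v) (star u) := by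
  ext i j
  simp [vecMulVec_apply, conjTranspose_apply, mul_comm]

lemma mul_vmv (A : Matrix n n ℂ) (u v : n → ℂ) :
    A * vecMulVec u v = vecMulVec (A *ᵥ u) v := by
  ext i j
  simp [Matrix.mul_apply, vecMulVec_apply, mulVec, dotProduct, Finset.sum_mul, mul_assoc]

lemma vmv_mul (A : Matrix n n ℂ) (u v : n → ℂ) :
    vecMulVec u v * A = vecMulVec u (v ᵥ* A) := by
  ext i j
  simp only [Matrix.mul_apply, vecMulVec_apply, vecMul, dotProduct, Finset.mul_sum]
  exact Finset.sum_congr rfl fun k _ => by ring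

lemma vmv_mul_vmv (u v u' v' : n → ℂ) :
    vecMulVec u v * vecMulVec u' v' = (v ⬝ᵥ u') • vecMulVec u v' := by
  ext i j
  simp only [Matrix.mul_apply, vecMulVec_apply, Matrix.smul_apply, dotProduct,
    Finset.sum_mul, smul_eq_mul]
  exact Finset.sum_congr rfl fun k _ => by ring


lemma trace_vmv (u v : n → ℂ) : Matrix.trace (vecMulVec u v) = u ⬝ᵥ v := by
  simp [Matrix.trace, vecMulVec_apply, dotProduct, Matrix.diag]

lemma posSemidef_smul_vmv {c : ℝ} (hc : 0 ≤ c) (x : n → ℂ) :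
    ((c : ℂ) • vecMulVec x (star x)).PosSemidef := by
  refine Matrix.PosSemidef.of_dotProduct_mulVec_nonneg ?_ ?_
  · unfold Matrix.IsHermitian
    rw [conjTranspose_smul, vmv_conjT, star_star]
    congr 1
    simp [Complex.ext_iff]
  · intro v
    have hmv : (vecMulVec x (star x)) *ᵥ v = (star x ⬝ᵥ v) • x := by
      funext i
      simp only [mulVec, vecMulVec_apply, dotProduct, Pi.smul_apply, smul_eq_mul,
        Finset.mul_sum]
      rw [Finset.sum_mul]
      exact Finset.sum_congr rfl fun k _ => by simp [mul_comm, mul_assoc, mul_left_comm]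
    have key : star v ⬝ᵥ (vecMulVec x (star x)) *ᵥ v
        = star (star x ⬝ᵥ v) * (star x ⬝ᵥ v) := by
      rw [hmv, dotProduct_smul, smul_eq_mul, star_dotProduct]
      simp [star_star, mul_comm]
    rw [Matrix.smul_mulVec, dotProduct_smul, key, smul_eq_mul]
    exact mul_nonneg (by exact_mod_cast hc) (star_mul_self_nonneg _)

open MatrixOrder in
lemma eq_msqrtExpr_of_sq_eq {A S : Matrix n n ℂ}
    (hS : S.PosSemidef) (hA : A.PosSemidef) (h : S ^ 2 = A) :
    S = (hA.1.eigenvectorUnitary : Matrix n n ℂ) * diagonal ((↑) ∘ (√·) ∘ hA.1.eigenvalues) *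
      (star hA.1.eigenvectorUnitary : Matrix n n ℂ) := by
  have h1 : CFC.sqrt A = S := CFC.sqrt_unique (by rw [← h, sq]) hS.nonneg
  rw [← h1, CFC.sqrt_eq_cfc, cfc_nnreal_eq_real _ A hA.nonneg, hA.1.cfc_eq, IsHermitian.cfc,
    Unitary.conjStarAlgAut_apply]
  congr 3
  funext i
  simp [Real.coe_sqrt, hA.eigenvalues_nonneg i]

end aux

/-- for a unit vector `ψ`, `ρ = |ψ⟩⟨ψ|` and Hermitian `H`,
`‖[H,ρ]‖₁² = 4·(⟨ψ, H²ψ⟩ − ⟨ψ, Hψ⟩²)`. -/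
theorem traceNorm_commutator_sq_of_pure {D : ℕ} (ψ : Fin D → ℂ)
    (hψ : ∑ x, ‖ψ x‖ ^ 2 = 1) (H : Matrix (Fin D) (Fin D) ℂ) (hH : H.IsHermitian) :
    traceNorm (H * Matrix.vecMulVec ψ (star ψ) - Matrix.vecMulVec ψ (star ψ) * H) ^ 2 =
      4 * ((star ψ ⬝ᵥ ((H * H) *ᵥ ψ)).re - ((star ψ ⬝ᵥ (H *ᵥ ψ)).re) ^ 2) := by
  classical
  set u : Fin D → ℂ := H *ᵥ ψ with hu
  set a : ℂ := star ψ ⬝ᵥ u with ha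
  set b : ℂ := star ψ ⬝ᵥ ((H * H) *ᵥ ψ) with hb
  -- norm one
  have hnorm : star ψ ⬝ᵥ ψ = 1 := by
    rw [show star ψ ⬝ᵥ ψ = ∑ x, ((‖ψ x‖ ^ 2 : ℝ) : ℂ) from ?_]
    · rw [← Complex.ofReal_sum, hψ]; norm_num
    · simp only [dotProduct, Pi.star_apply]
      exact Finset.sum_congr rfl fun x _ => by
        rw [Complex.star_def, mul_comm, Complex.mul_conj, Complex.normSq_eq_norm_sq]
  -- star u = star ψ ᵥ* H
  have hsu : star u = star ψ ᵥ* H := by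
    rw [hu, star_mulVec, hH.eq]
  have hua : star u ⬝ᵥ ψ = a := by
    rw [hsu, ← dotProduct_mulVec, ← hu, ha]
  have hstar_a : star a = a := by
    rw [ha, ← star_dotProduct, hua, ha]
  have hub : star u ⬝ᵥ u = b := by
    rw [hsu, ← dotProduct_mulVec, hu, mulVec_mulVec, ← hb]
  -- the commutator
  set C : Matrix (Fin D) (Fin D) ℂ :=
    H * Matrix.vecMulVec ψ (star ψ) - Matrix.vecMulVec ψ (star ψ) * H with hC
  have hC_eq : C = vecMulVec u (star ψ) - vecMulVec ψ (star u) := by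
    rw [hC, mul_vmv, vmv_mul, ← hu, hsu]
  have hCH : Cᴴ = -C := by
    rw [hC_eq]
    rw [conjTranspose_sub, vmv_conjT, vmv_conjT, star_star, star_star]
    abel
  -- φ and the variance
  set φ : Fin D → ℂ := u - a • ψ with hφ
  set w : ℂ := star φ ⬝ᵥ φ with hw
  have hsφ : star φ = star u - a • star ψ := by
    rw [hφ, star_sub, star_smul, hstar_a]
  have hψφ : star ψ ⬝ᵥ φ = 0 := by
    rw [hφ, dotProduct_sub, dotProduct_smul, hnorm, ← ha, smul_eq_mul, mul_one, sub_self]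
  have hφψ : star φ ⬝ᵥ ψ = 0 := by
    rw [hsφ, sub_dotProduct, smul_dotProduct, hua, hnorm, smul_eq_mul, mul_one, sub_self]
  have hw_eq : w = b - a * a := by
    rw [hw, hsφ, hφ]
    simp only [sub_dotProduct, dotProduct_sub, smul_dotProduct, dotProduct_smul,
      smul_eq_mul, hub, hua, hnorm, ← ha]
    ring
  -- CᴴC
  have hCC : Cᴴ * C = w • vecMulVec ψ (star ψ) + vecMulVec φ (star φ) := by
    rw [hCH, hC_eq, neg_mul, sub_mul, mul_sub, mul_sub,
      vmv_mul_vmv, vmv_mul_vmv, vmv_mul_vmv, vmv_mul_vmv, hnorm, hua, hub, ← ha]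
    have hvφ : vecMulVec φ (star φ)
        = vecMulVec u (star u) - a • vecMulVec u (star ψ)
          - a • vecMulVec ψ (star u) + (a * a) • vecMulVec ψ (star ψ) := by
      ext i j
      rw [hsφ]
      simp only [hφ, hsφ, vecMulVec_apply, Matrix.add_apply, Matrix.sub_apply,
        Matrix.smul_apply, Pi.sub_apply, Pi.smul_apply, smul_eq_mul]
      ring
    rw [hvφ, hw_eq]
    ext i j
    simp only [Matrix.add_apply, Matrix.sub_apply, Matrix.smul_apply, Matrix.neg_apply,
      one_smul, smul_eq_mul, vecMulVec_apply]
    ring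
  have hw_nonneg : (0 : ℂ) ≤ w := dotProduct_star_self_nonneg φ
  have hw_im : w.im = 0 := ((Complex.nonneg_iff).mp hw_nonneg).2.symm
  have hw_re_nonneg : 0 ≤ w.re := ((Complex.nonneg_iff).mp hw_nonneg).1
  have hw_real : w = ((w.re : ℝ) : ℂ) := by
    exact Complex.ext (by simp) (by simp [hw_im])
  have ha_im : a.im = 0 := by
    have h2 := congrArg Complex.im hstar_a
    simp [Complex.star_def] at h2
    linarith
  -- RHS rewrite
  have hRHS : b.re - a.re ^ 2 = w.re := by
    rw [hw_eq]
    simp only [Complex.sub_re, Complex.mul_re, ha_im]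
    ring
  by_cases hφ0 : φ = 0
  · -- degenerate case: w = 0, commutator squared is 0
    have hw0 : w = 0 := by rw [hw, hφ0]; simp
    have hCC0 : Cᴴ * C = 0 := by
      rw [hCC, hw0, hφ0]
      ext i j
      simp [vecMulVec_apply]
    have hps : (Cᴴ * C).PosSemidef := posSemidef_conjTranspose_mul_self C
    have hsqrt : msqrt (Cᴴ * C) = 0 := by
      rw [msqrt, dif_pos hps]
      refine (eq_msqrtExpr_of_sq_eq ?_ hps ?_).symm
      · exact Matrix.PosSemidef.zero
      · rw [hCC0]; simp [pow_two]
    rw [traceNorm, hsqrt]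
    simp only [Matrix.trace_zero, Complex.zero_re]
    rw [hRHS, hw0]
    simp
  · -- main case
    have hw_ne : w ≠ 0 := by
      rw [hw]
      exact fun h => hφ0 (dotProduct_star_self_eq_zero.mp h)
    have hw_pos : 0 < w.re := by
      rcases lt_or_eq_of_le hw_re_nonneg with h | h
      · exact h
      · exact absurd (by rw [hw_real, ← h]; simp) hw_ne
    set r : ℝ := Real.sqrt w.re with hr
    have hr_pos : 0 < r := Real.sqrt_pos.mpr hw_pos
    have hr_sq : (r : ℂ) * (r : ℂ) = w := by
      rw [← Complex.ofReal_mul, hr, Real.mul_self_sqrt hw_re_nonneg]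
      exact hw_real.symm
    set S : Matrix (Fin D) (Fin D) ℂ :=
      (r : ℂ) • vecMulVec ψ (star ψ) + ((r⁻¹ : ℝ) : ℂ) • vecMulVec φ (star φ) with hS
    have hS_psd : S.PosSemidef := by
      exact (posSemidef_smul_vmv hr_pos.le ψ).add
        (posSemidef_smul_vmv (by positivity) φ)
    have hS_sq : S ^ 2 = Cᴴ * C := by
      rw [pow_two, hS, hCC]
      rw [add_mul, mul_add, mul_add, smul_mul_assoc, smul_mul_assoc, smul_mul_assoc,
        smul_mul_assoc, mul_smul_comm, mul_smul_comm, mul_smul_comm, mul_smul_comm,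
        vmv_mul_vmv, vmv_mul_vmv, vmv_mul_vmv, vmv_mul_vmv, hnorm, hψφ, hφψ, ← hw]
      simp only [one_smul, zero_smul, smul_zero, add_zero, zero_add, smul_smul]
      rw [hr_sq]
      congr 1
      have : ((r⁻¹ : ℝ) : ℂ) * (((r⁻¹ : ℝ) : ℂ) * w) = 1 := by
        rw [← hr_sq]
        push_cast
        field_simp
      rw [this, one_smul]
    have hps : (Cᴴ * C).PosSemidef := posSemidef_conjTranspose_mul_self C
    have hsqrt : msqrt (Cᴴ * C) = S := by
      rw [msqrt, dif_pos hps]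
      exact (eq_msqrtExpr_of_sq_eq hS_psd hps hS_sq).symm
    have htrρ : Matrix.trace (vecMulVec ψ (star ψ)) = 1 := by
      rw [trace_vmv, dotProduct_comm, hnorm]
    have htrφ : Matrix.trace (vecMulVec φ (star φ)) = w := by
      rw [trace_vmv, dotProduct_comm, ← hw]
    have htrS : (Matrix.trace S).re = 2 * r := by
      rw [hS, Matrix.trace_add, Matrix.trace_smul, Matrix.trace_smul, htrρ, htrφ]
      rw [hw_real]
      simp only [smul_eq_mul, mul_one, ← Complex.ofReal_mul, ← Complex.ofReal_add,
        Complex.ofReal_re]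
      rw [hr, inv_mul_eq_div, Real.div_sqrt]
      ring
    rw [traceNorm, hsqrt, htrS, hRHS]
    rw [hr, mul_pow, Real.sq_sqrt hw_pos.le]
    ring

end Paper
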